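/- arXiv:1912.01032 — 8 statements merged into one kernel-verified Lean document; each statement's English description precedes it below -/
import Mathlib

section
/- Let p : ℝ^n → ℝ be a non-constant multilinear polynomial taking values in {-1,1} on {-1,1}^n. Then for every a with a_i ∈ (-1,1) for all i, we have p(a) ∈ (-1,1). -/
/-- The vertex of the cube associated to a sign pattern. -/
noncomputable def cubeVert {n : ℕ} (ε : Fin n → Bool) : Fin n → ℝ :=
  fun i => if ε i then 1 else -1

/-- The weight of a vertex relative to an interior point. -/
noncomputable def cubeWt {n : ℕ} (a : Fin n → ℝ) (ε : Fin n → Bool) : ℝ :=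
  ∏ i, (1 + a i * cubeVert ε i) / 2

lemma cubeKey {n : ℕ} (a : Fin n → ℝ) (S : Finset (Fin n)) :
    ∑ ε : Fin n → Bool, cubeWt a ε * ∏ i ∈ S, cubeVert ε i = ∏ i ∈ S, a i := by
  classical
  have h1 : ∀ ε : Fin n → Bool, cubeWt a ε * ∏ i ∈ S, cubeVert ε i
      = ∏ i, ((1 + a i * (if ε i then (1:ℝ) else -1)) / 2 *
          if i ∈ S then (if ε i then (1:ℝ) else -1) else 1) := by
    intro ε
    rw [Finset.prod_mul_distrib]
    congr 1
    rw [Finset.prod_ite_mem, Finset.univ_inter]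
    rfl
  calc ∑ ε : Fin n → Bool, cubeWt a ε * ∏ i ∈ S, cubeVert ε i
      = ∑ ε ∈ Fintype.piFinset (fun _ : Fin n => (Finset.univ : Finset Bool)),
          ∏ i, ((1 + a i * (if ε i then (1:ℝ) else -1)) / 2 *
            if i ∈ S then (if ε i then (1:ℝ) else -1) else 1) := by
        rw [Fintype.piFinset_univ]; exact Finset.sum_congr rfl fun ε _ => h1 ε
    _ = ∏ i, ∑ b : Bool, ((1 + a i * (if b then (1:ℝ) else -1)) / 2 *
          if i ∈ S then (if b then (1:ℝ) else -1) else 1) := by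
        rw [Finset.prod_univ_sum]
    _ = ∏ i, (if i ∈ S then a i else 1) := by
        refine Finset.prod_congr rfl fun i _ => ?_
        rw [Fintype.sum_bool]
        by_cases h : i ∈ S <;> simp [h] <;> ring
    _ = ∏ i ∈ S, a i := by rw [Finset.prod_ite_mem, Finset.univ_inter]

/-- A non-constant multilinear polynomial taking values in `{-1,1}` on the
hypercube takes values in the open interval `(-1,1)` on the open cube. -/
theorem stmt_2 (n : ℕ) (p : (Fin n → ℝ) → ℝ)
    (hml : ∃ c : Finset (Fin n) → ℝ,
      ∀ x : Fin n → ℝ, p x = ∑ S : Finset (Fin n), c S * ∏ i ∈ S, x i)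
    (hbool : ∀ a : Fin n → ℝ, (∀ i, a i = 1 ∨ a i = -1) → p a = 1 ∨ p a = -1)
    (hnc : ∃ a b : Fin n → ℝ, (∀ i, a i = 1 ∨ a i = -1) ∧ (∀ i, b i = 1 ∨ b i = -1) ∧
      p a ≠ p b) :
    ∀ a : Fin n → ℝ, (∀ i, a i ∈ Set.Ioo (-1 : ℝ) 1) → p a ∈ Set.Ioo (-1 : ℝ) 1 := by
  classical
  obtain ⟨c, hc⟩ := hml
  intro a ha
  -- values at vertices are ±1
  have hval : ∀ ε : Fin n → Bool, p (cubeVert ε) = 1 ∨ p (cubeVert ε) = -1 := by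
    intro ε
    exact hbool _ (fun i => by by_cases h : ε i <;> simp [cubeVert, h])
  -- weights are positive and sum to 1
  have hwpos : ∀ ε : Fin n → Bool, 0 < cubeWt a ε := by
    intro ε
    apply Finset.prod_pos
    intro i _
    obtain ⟨h1, h2⟩ := ha i
    by_cases h : ε i <;> simp [cubeVert, h] <;> linarith
  have hsum1 : ∑ ε : Fin n → Bool, cubeWt a ε = 1 := by
    simpa using cubeKey a ∅
  -- value at a is the weighted sum of vertex values
  have hpa : p a = ∑ ε : Fin n → Bool, cubeWt a ε * p (cubeVert ε) := by
    rw [hc a]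
    have h2 : ∀ ε : Fin n → Bool, cubeWt a ε * p (cubeVert ε)
        = ∑ S : Finset (Fin n), cubeWt a ε * (c S * ∏ i ∈ S, cubeVert ε i) := by
      intro ε; rw [hc, Finset.mul_sum]
    rw [Finset.sum_congr rfl fun ε _ => h2 ε, Finset.sum_comm]
    refine Finset.sum_congr rfl fun S _ => ?_
    rw [← cubeKey a S, Finset.mul_sum]
    exact Finset.sum_congr rfl fun ε _ => by ring
  -- both values ±1 are attained at vertices
  obtain ⟨x, y, hx, hy, hxy⟩ := hnc
  have mkε : ∀ z : Fin n → ℝ, (∀ i, z i = 1 ∨ z i = -1) →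
      ∃ ε : Fin n → Bool, cubeVert ε = z := by
    intro z hz
    refine ⟨fun i => decide (z i = 1), funext fun i => ?_⟩
    rcases hz i with h | h
    · simp [cubeVert, h]
    · have hd : decide (z i = 1) = false := by
        rw [decide_eq_false_iff_not, h]; norm_num
      show (if decide (z i = 1) = true then (1:ℝ) else -1) = z i
      rw [hd, h]
      norm_num
  obtain ⟨εx, hεx⟩ := mkε x hx
  obtain ⟨εy, hεy⟩ := mkε y hy
  have hboth : (∃ ε, p (cubeVert ε) = 1) ∧ (∃ ε, p (cubeVert ε) = -1) := by
    rcases hval εx with h1 | h1 <;> rcases hval εy with h2 | h2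
    · exact absurd (by rw [← hεx, ← hεy, h1, h2]) hxy
    · exact ⟨⟨εx, h1⟩, ⟨εy, h2⟩⟩
    · exact ⟨⟨εy, h2⟩, ⟨εx, h1⟩⟩
    · exact absurd (by rw [← hεx, ← hεy, h1, h2]) hxy
  obtain ⟨⟨εp, hεp⟩, ⟨εm, hεm⟩⟩ := hboth
  constructor
  · -- lower bound
    rw [hpa]
    calc (-1 : ℝ) = ∑ ε : Fin n → Bool, -cubeWt a ε := by
          rw [Finset.sum_neg_distrib, hsum1]
      _ < ∑ ε : Fin n → Bool, cubeWt a ε * p (cubeVert ε) := by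
          refine Finset.sum_lt_sum (fun ε _ => ?_) ⟨εp, Finset.mem_univ _, ?_⟩
          · rcases hval ε with h | h <;> rw [h] <;> nlinarith [hwpos ε]
          · rw [hεp]; nlinarith [hwpos εp]
  · -- upper bound
    rw [hpa]
    calc ∑ ε : Fin n → Bool, cubeWt a ε * p (cubeVert ε)
        < ∑ ε : Fin n → Bool, cubeWt a ε := by
          refine Finset.sum_lt_sum (fun ε _ => ?_) ⟨εm, Finset.mem_univ _, ?_⟩
          · rcases hval ε with h | h <;> rw [h] <;> nlinarith [hwpos ε]
          · rw [hεm]; nlinarith [hwpos εm]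
      _ = 1 := hsum1
end

section
/- Let p : ℝ^n → ℝ be a non-constant multilinear polynomial taking values in {-1,1} on {-1,1}^n, and let a ∈ [-1,1]^n satisfy p(a) = -1. Then the restriction of p obtained by fixing the coordinates i with a_i ∈ {-1,1} to their values a_i is a constant function of the remaining coordinates. -/
/-- If a non-constant multilinear polynomial `p` with Boolean values on the
hypercube attains the value `-1` at a point `a` of the cube `[-1,1]^n`, then
fixing the `±1` coordinates of `a` makes `p` constant in the remaining
coordinates: `a` is a feasible solution. -/
theorem stmt_3 (n : ℕ) (p : (Fin n → ℝ) → ℝ)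
    (hml : ∃ c : Finset (Fin n) → ℝ,
      ∀ x : Fin n → ℝ, p x = ∑ S : Finset (Fin n), c S * ∏ i ∈ S, x i)
    (hbool : ∀ b : Fin n → ℝ, (∀ i, b i = 1 ∨ b i = -1) → p b = 1 ∨ p b = -1)
    (hnc : ∃ b b' : Fin n → ℝ, (∀ i, b i = 1 ∨ b i = -1) ∧ (∀ i, b' i = 1 ∨ b' i = -1) ∧
      p b ≠ p b')
    (a : Fin n → ℝ) (ha : ∀ i, a i ∈ Set.Icc (-1 : ℝ) 1) (hval : p a = -1) :
    ∀ y : Fin n → ℝ, (∀ i, (a i = 1 ∨ a i = -1) → y i = a i) → p y = p a := by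
  classical
  obtain ⟨c, hc⟩ := hml
  -- p is affine in each coordinate
  have affine : ∀ (x : Fin n → ℝ) (j : Fin n) (t : ℝ),
      p (Function.update x j t)
        = (1 + t)/2 * p (Function.update x j 1)
          + (1 - t)/2 * p (Function.update x j (-1)) := by
    intro x j t
    simp only [hc]
    rw [Finset.mul_sum, Finset.mul_sum, ← Finset.sum_add_distrib]
    refine Finset.sum_congr rfl fun S _ => ?_
    by_cases hj : j ∈ S
    · rw [Finset.prod_update_of_mem hj, Finset.prod_update_of_mem hj,
        Finset.prod_update_of_mem hj]
      ring
    · rw [Finset.prod_update_of_notMem hj, Finset.prod_update_of_notMem hj,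
        Finset.prod_update_of_notMem hj]
      ring
  -- on the cube, p takes values in [-1,1]
  have bound : ∀ (k : ℕ) (x : Fin n → ℝ), (∀ i, x i ∈ Set.Icc (-1 : ℝ) 1) →
      (Finset.univ.filter (fun i => x i ≠ 1 ∧ x i ≠ -1)).card ≤ k →
      p x ∈ Set.Icc (-1 : ℝ) 1 := by
    intro k
    induction k with
    | zero =>
      intro x hx hcard
      have hall : ∀ i, x i = 1 ∨ x i = -1 := by
        intro i
        by_contra h
        push_neg at h
        have hi : i ∈ Finset.univ.filter (fun i => x i ≠ 1 ∧ x i ≠ -1) := by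
          simp [h.1, h.2]
        have := Finset.card_pos.mpr ⟨i, hi⟩
        omega
      rcases hbool x hall with h | h <;> rw [h] <;> constructor <;> norm_num
    | succ k ih =>
      intro x hx hcard
      by_cases hall : ∀ i, x i = 1 ∨ x i = -1
      · rcases hbool x hall with h | h <;> rw [h] <;> constructor <;> norm_num
      · push_neg at hall
        obtain ⟨j, hj⟩ := hall
        have hjmem : j ∈ Finset.univ.filter (fun i => x i ≠ 1 ∧ x i ≠ -1) := by
          simp only [Finset.mem_filter, Finset.mem_univ, true_and]
          tauto
        have hsub : ∀ t : ℝ, t = 1 ∨ t = -1 →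
            (Finset.univ.filter (fun i => Function.update x j t i ≠ 1 ∧
              Function.update x j t i ≠ -1)) ⊆
            (Finset.univ.filter (fun i => x i ≠ 1 ∧ x i ≠ -1)).erase j := by
          intro t ht i hi
          simp only [Finset.mem_filter, Finset.mem_univ, true_and] at hi
          by_cases hij : i = j
          · subst hij
            rw [Function.update_self] at hi
            tauto
          · rw [Finset.mem_erase]
            rw [Function.update_of_ne hij] at hi
            simp only [Finset.mem_filter, Finset.mem_univ, true_and]
            exact ⟨hij, hi⟩
        have hcard' : ∀ t : ℝ,
            t = 1 ∨ t = -1 →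
            (Finset.univ.filter (fun i => Function.update x j t i ≠ 1 ∧
              Function.update x j t i ≠ -1)).card ≤ k := by
          intro t ht
          have h1 := Finset.card_le_card (hsub t ht)
          have h2 := Finset.card_erase_of_mem hjmem
          omega
        have hup : ∀ t : ℝ, t = 1 ∨ t = -1 → ∀ i, Function.update x j t i ∈ Set.Icc (-1 : ℝ) 1 := by
          intro t ht i
          by_cases hij : i = j
          · subst hij
            rw [Function.update_self]
            rcases ht with h | h <;> rw [h] <;> constructor <;> norm_num
          · rw [Function.update_of_ne hij]; exact hx i
        have h1 := ih (Function.update x j 1) (hup 1 (Or.inl rfl)) (hcard' 1 (Or.inl rfl))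
        have h2 := ih (Function.update x j (-1)) (hup (-1) (Or.inr rfl)) (hcard' (-1) (Or.inr rfl))
        have key := affine x j (x j)
        rw [Function.update_eq_self] at key
        obtain ⟨hl, hr⟩ := hx j
        obtain ⟨h1l, h1r⟩ := h1
        obtain ⟨h2l, h2r⟩ := h2
        constructor <;> nlinarith
  have boundn : ∀ (x : Fin n → ℝ), (∀ i, x i ∈ Set.Icc (-1 : ℝ) 1) →
      p x ∈ Set.Icc (-1 : ℝ) 1 := by
    intro x hx
    exact bound (Finset.univ.filter (fun i => x i ≠ 1 ∧ x i ≠ -1)).card x hx le_rfl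
  -- the value -1 propagates to all vertices of the free subcube
  have step3 : ∀ (F : Finset (Fin n)) (x : Fin n → ℝ),
      (∀ i, x i ∈ Set.Icc (-1 : ℝ) 1) → (∀ j ∈ F, -1 < x j ∧ x j < 1) → p x = -1 →
      ∀ z, (∀ i, i ∉ F → z i = x i) → (∀ i ∈ F, z i = 1 ∨ z i = -1) → p z = -1 := by
    intro F
    induction F using Finset.induction_on with
    | empty =>
      intro x hx _ hpx z hz _
      have : z = x := funext fun i => hz i (by simp)
      rw [this]; exact hpx
    | @insert j s hj ih =>
      intro x hx hopen hpx z hz hz1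
      obtain ⟨hjl, hjr⟩ := hopen j (Finset.mem_insert_self j s)
      have key := affine x j (x j)
      rw [Function.update_eq_self] at key
      have hup : ∀ t : ℝ, t = 1 ∨ t = -1 → ∀ i, Function.update x j t i ∈ Set.Icc (-1 : ℝ) 1 := by
        intro t ht i
        by_cases hij : i = j
        · subst hij
          rw [Function.update_self]
          rcases ht with h | h <;> rw [h] <;> constructor <;> norm_num
        · rw [Function.update_of_ne hij]; exact hx i
      obtain ⟨h1l, h1r⟩ := boundn (Function.update x j 1) (hup 1 (Or.inl rfl))
      obtain ⟨h2l, h2r⟩ := boundn (Function.update x j (-1)) (hup (-1) (Or.inr rfl))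
      -- both endpoints are -1
      have hsum : (1 + x j)/2 * (p (Function.update x j 1) + 1)
          + (1 - x j)/2 * (p (Function.update x j (-1)) + 1) = 0 := by
        rw [hpx] at key; nlinarith
      have e1 : (1 + x j)/2 * (p (Function.update x j 1) + 1) ≥ 0 := by nlinarith
      have e2 : (1 - x j)/2 * (p (Function.update x j (-1)) + 1) ≥ 0 := by nlinarith
      have z1 : (1 + x j)/2 * (p (Function.update x j 1) + 1) = 0 := by linarith
      have z2 : (1 - x j)/2 * (p (Function.update x j (-1)) + 1) = 0 := by linarith
      have v1 : p (Function.update x j 1) = -1 := by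
        rcases mul_eq_zero.mp z1 with h | h
        · exfalso; nlinarith
        · linarith
      have v2 : p (Function.update x j (-1)) = -1 := by
        rcases mul_eq_zero.mp z2 with h | h
        · exfalso; nlinarith
        · linarith
      set x' := Function.update x j (z j) with hx'
      have hpx' : p x' = -1 := by
        rcases hz1 j (Finset.mem_insert_self j s) with h | h <;> rw [hx', h]
        · exact v1
        · exact v2
      apply ih x'
      · intro i
        by_cases hij : i = j
        · subst hij
          rw [hx', Function.update_self]
          rcases hz1 i (Finset.mem_insert_self i s) with h | h <;> rw [h] <;>
            constructor <;> norm_num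
        · rw [hx', Function.update_of_ne hij]; exact hx i
      · intro i hi
        have hij : i ≠ j := fun e => hj (e ▸ hi)
        rw [hx', Function.update_of_ne hij]
        exact hopen i (Finset.mem_insert_of_mem hi)
      · exact hpx'
      · intro i hi
        by_cases hij : i = j
        · subst hij; rw [hx', Function.update_self]
        · rw [hx', Function.update_of_ne hij]
          exact hz i (by simp [hij, hi])
      · intro i hi
        exact hz1 i (Finset.mem_insert_of_mem hi)
  -- value -1 on all vertices of a subcube forces -1 everywhere in those coordinates
  have step4 : ∀ (F : Finset (Fin n)) (y : Fin n → ℝ),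
      (∀ z, (∀ i, i ∉ F → z i = y i) → (∀ i ∈ F, z i = 1 ∨ z i = -1) → p z = -1) →
      p y = -1 := by
    intro F
    induction F using Finset.induction_on with
    | empty =>
      intro y h
      exact h y (fun _ _ => rfl) (by simp)
    | @insert j s hj ih =>
      intro y h
      apply ih y
      intro z hz hz1
      have key := affine z j (z j)
      rw [Function.update_eq_self] at key
      have h1 : p (Function.update z j 1) = -1 := by
        apply h
        · intro i hi
          have hij : i ≠ j := fun e => hi (e ▸ Finset.mem_insert_self j s)
          rw [Function.update_of_ne hij]
          exact hz i (fun his => hi (Finset.mem_insert_of_mem his))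
        · intro i hi
          rcases Finset.mem_insert.mp hi with e | his
          · subst e; rw [Function.update_self]; exact Or.inl rfl
          · have hij : i ≠ j := fun e => hj (e ▸ his)
            rw [Function.update_of_ne hij]
            exact hz1 i his
      have h2 : p (Function.update z j (-1)) = -1 := by
        apply h
        · intro i hi
          have hij : i ≠ j := fun e => hi (e ▸ Finset.mem_insert_self j s)
          rw [Function.update_of_ne hij]
          exact hz i (fun his => hi (Finset.mem_insert_of_mem his))
        · intro i hi
          rcases Finset.mem_insert.mp hi with e | his
          · subst e; rw [Function.update_self]; exact Or.inr rfl
          · have hij : i ≠ j := fun e => hj (e ▸ his)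
            rw [Function.update_of_ne hij]
            exact hz1 i his
      rw [h1, h2] at key
      rw [key]; ring
  -- conclude
  intro y hy
  rw [hval]
  set F : Finset (Fin n) := Finset.univ.filter (fun i => ¬(a i = 1 ∨ a i = -1)) with hF
  apply step4 F y
  intro z hz hz1
  apply step3 F a ha ?_ hval z ?_ hz1
  · intro j hjF
    rw [hF, Finset.mem_filter] at hjF
    push_neg at hjF
    obtain ⟨-, h1, h2⟩ := hjF
    obtain ⟨hl, hr⟩ := ha j
    exact ⟨lt_of_le_of_ne hl (Ne.symm h2), lt_of_le_of_ne hr h1⟩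
  · intro i hi
    rw [hF, Finset.mem_filter] at hi
    push_neg at hi
    have hai : a i = 1 ∨ a i = -1 := hi (Finset.mem_univ i)
    rw [hz i (by rw [hF, Finset.mem_filter]; push_neg; intro _; exact hai), hy i hai]
end

section
/- Let f be a Boolean formula that is the conjunction of m clauses c_1,…,c_m, each a non-constant Boolean function {-1,1}^n → {-1,1}, and let F = ∑_{j=1}^m p_j where p_j is the multilinear (Fourier) extension of c_j. Then f is satisfiable (some a ∈ {-1,1}^n has c_j(a) = -1 for all j) if and only if min over x ∈ [-1,1]^n of F(x) equals -m. -/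
open Classical in
/-- The set of coordinates of `x` that are not `±1`. -/
noncomputable def badSet {n : ℕ} (x : Fin n → ℝ) : Finset (Fin n) :=
  Finset.univ.filter (fun i => ¬(x i = 1 ∨ x i = -1))

lemma affine_interp {n : ℕ} (F : (Fin n → ℝ) → ℝ) (c : Finset (Fin n) → ℝ)
    (hF : ∀ x, F x = ∑ S : Finset (Fin n), c S * ∏ i ∈ S, x i)
    (x : Fin n → ℝ) (i : Fin n) :
    F x = ((1 + x i)/2) * F (Function.update x i 1)
        + ((1 - x i)/2) * F (Function.update x i (-1)) := by
  have hx : F x = F (Function.update x i (x i)) := by rw [Function.update_eq_self]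
  rw [hx, hF, hF, hF, Finset.mul_sum, Finset.mul_sum, ← Finset.sum_add_distrib]
  refine Finset.sum_congr rfl fun S _ => ?_
  by_cases hi : i ∈ S
  · rw [Finset.prod_update_of_mem hi, Finset.prod_update_of_mem hi,
      Finset.prod_update_of_mem hi]
    ring
  · rw [Finset.prod_update_of_notMem hi, Finset.prod_update_of_notMem hi,
      Finset.prod_update_of_notMem hi]
    ring

lemma round_aux {n : ℕ} (F : (Fin n → ℝ) → ℝ) (c : Finset (Fin n) → ℝ)
    (hF : ∀ x, F x = ∑ S : Finset (Fin n), c S * ∏ i ∈ S, x i) :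
    ∀ k : ℕ, ∀ x : Fin n → ℝ, (∀ i, x i ∈ Set.Icc (-1 : ℝ) 1) →
      (badSet x).card ≤ k →
      ∃ a : Fin n → ℝ, (∀ i, a i = 1 ∨ a i = -1) ∧ F a ≤ F x := by
  intro k
  induction k with
  | zero =>
    intro x hx hcard
    refine ⟨x, fun i => ?_, le_refl _⟩
    by_contra h
    have hi : i ∈ badSet x := by
      simp only [badSet, Finset.mem_filter, Finset.mem_univ, true_and]
      exact h
    have := Finset.card_pos.mpr ⟨i, hi⟩
    omega
  | succ k ih =>
    intro x hx hcard
    by_cases hb : badSet x = ∅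
    · refine ⟨x, fun i => ?_, le_refl _⟩
      by_contra h
      have hi : i ∈ badSet x := by
        simp only [badSet, Finset.mem_filter, Finset.mem_univ, true_and]
        exact h
      simp [hb] at hi
    · obtain ⟨i, hi⟩ := Finset.nonempty_iff_ne_empty.mpr hb
      -- the bad set of an update is smaller
      have hsub : ∀ t : ℝ, (t = 1 ∨ t = -1) →
          badSet (Function.update x i t) ⊆ (badSet x).erase i := by
        intro t ht j hj
        simp only [badSet, Finset.mem_filter, Finset.mem_univ, true_and] at hj
        by_cases hji : j = i
        · subst hji; rw [Function.update_self] at hj; exact absurd ht hj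
        · rw [Function.update_of_ne hji] at hj
          refine Finset.mem_erase.mpr ⟨hji, ?_⟩
          simp only [badSet, Finset.mem_filter, Finset.mem_univ, true_and]
          exact hj
      have hcard' : ∀ t : ℝ, (t = 1 ∨ t = -1) →
          (badSet (Function.update x i t)).card ≤ k := by
        intro t ht
        have h1 := Finset.card_le_card (hsub t ht)
        have h2 : ((badSet x).erase i).card = (badSet x).card - 1 :=
          Finset.card_erase_of_mem hi
        omega
      have hx' : ∀ t : ℝ, (t = 1 ∨ t = -1) →
          ∀ j, Function.update x i t j ∈ Set.Icc (-1 : ℝ) 1 := by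
        intro t ht j
        by_cases hji : j = i
        · subst hji; rw [Function.update_self]
          rcases ht with h | h <;> simp [h]
        · rw [Function.update_of_ne hji]; exact hx j
      have key := affine_interp F c hF x i
      have hxi := hx i
      simp only [Set.mem_Icc] at hxi
      have hl1 : (0:ℝ) ≤ (1 + x i)/2 := by linarith [hxi.1]
      have hl2 : (0:ℝ) ≤ (1 - x i)/2 := by linarith [hxi.2]
      have hmin : min (F (Function.update x i 1)) (F (Function.update x i (-1))) ≤ F x := by
        rw [key]
        nlinarith [mul_le_mul_of_nonneg_left
            (min_le_left (F (Function.update x i 1)) (F (Function.update x i (-1)))) hl1,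
          mul_le_mul_of_nonneg_left
            (min_le_right (F (Function.update x i 1)) (F (Function.update x i (-1)))) hl2]
      rcases le_total (F (Function.update x i 1)) (F (Function.update x i (-1))) with h | h
      · obtain ⟨a, ha, hle⟩ := ih (Function.update x i 1) (hx' 1 (Or.inl rfl))
          (hcard' 1 (Or.inl rfl))
        refine ⟨a, ha, hle.trans ?_⟩
        calc F (Function.update x i 1) = min _ _ := (min_eq_left h).symm
          _ ≤ F x := hmin
      · obtain ⟨a, ha, hle⟩ := ih (Function.update x i (-1)) (hx' (-1) (Or.inr rfl))
          (hcard' (-1) (Or.inr rfl))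
        refine ⟨a, ha, hle.trans ?_⟩
        calc F (Function.update x i (-1)) = min _ _ := (min_eq_right h).symm
          _ ≤ F x := hmin

/-- Reduction of SAT to continuous optimization: a conjunction of `m`
non-constant Boolean clauses (with multilinear extensions `p j`) is satisfiable
iff the minimum of `F = ∑ j, p j` over the cube `[-1,1]^n` equals `-m`. -/
theorem stmt_4 (n m : ℕ) (p : Fin m → (Fin n → ℝ) → ℝ)
    (hml : ∀ j, ∃ c : Finset (Fin n) → ℝ,
      ∀ x : Fin n → ℝ, p j x = ∑ S : Finset (Fin n), c S * ∏ i ∈ S, x i)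
    (hbool : ∀ j, ∀ a : Fin n → ℝ, (∀ i, a i = 1 ∨ a i = -1) →
      p j a = 1 ∨ p j a = -1)
    (hnc : ∀ j, ∃ b b' : Fin n → ℝ,
      (∀ i, b i = 1 ∨ b i = -1) ∧ (∀ i, b' i = 1 ∨ b' i = -1) ∧ p j b ≠ p j b') :
    (∃ a : Fin n → ℝ, (∀ i, a i = 1 ∨ a i = -1) ∧ ∀ j, p j a = -1) ↔
      IsLeast ((fun x => ∑ j, p j x) ''
        {x : Fin n → ℝ | ∀ i, x i ∈ Set.Icc (-1 : ℝ) 1}) (-(m : ℝ)) := by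
  set F : (Fin n → ℝ) → ℝ := fun x => ∑ j, p j x with hFdef
  -- F is multilinear
  choose c hc using hml
  have hF : ∀ x, F x = ∑ S : Finset (Fin n), (∑ j, c j S) * ∏ i ∈ S, x i := by
    intro x
    simp only [hFdef]
    calc ∑ j, p j x = ∑ j : Fin m, ∑ S : Finset (Fin n), c j S * ∏ i ∈ S, x i := by
          exact Finset.sum_congr rfl fun j _ => hc j x
      _ = ∑ S : Finset (Fin n), ∑ j : Fin m, c j S * ∏ i ∈ S, x i := Finset.sum_comm
      _ = ∑ S : Finset (Fin n), (∑ j, c j S) * ∏ i ∈ S, x i := by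
          exact Finset.sum_congr rfl fun S _ => (Finset.sum_mul ..).symm
  -- at any vertex, -m ≤ F a
  have hvert : ∀ a : Fin n → ℝ, (∀ i, a i = 1 ∨ a i = -1) → -(m : ℝ) ≤ F a := by
    intro a ha
    have : ∑ j : Fin m, (-1 : ℝ) ≤ ∑ j, p j a := by
      refine Finset.sum_le_sum fun j _ => ?_
      rcases hbool j a ha with h | h <;> rw [h] <;> norm_num
    simpa using this
  -- any cube point dominates some vertex value
  have hround : ∀ x : Fin n → ℝ, (∀ i, x i ∈ Set.Icc (-1 : ℝ) 1) →
      ∃ a : Fin n → ℝ, (∀ i, a i = 1 ∨ a i = -1) ∧ F a ≤ F x := by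
    intro x hx
    exact round_aux F _ hF (badSet x).card x hx (le_refl _)
  constructor
  · rintro ⟨a, ha, hpa⟩
    constructor
    · refine ⟨a, fun i => ?_, ?_⟩
      · rcases ha i with h | h <;> simp [h]
      · simp [hFdef, hpa]
    · rintro y ⟨x, hx, rfl⟩
      obtain ⟨a', ha', hle⟩ := hround x hx
      exact (hvert a' ha').trans hle
  · rintro ⟨⟨x, hx, hFx⟩, _⟩
    obtain ⟨a, ha, hle⟩ := hround x hx
    have hFa : F a = -(m : ℝ) := le_antisymm (hFx ▸ hle) (hvert a ha)
    refine ⟨a, ha, ?_⟩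
    have hsum : ∑ j : Fin m, (-1 : ℝ) = ∑ j, p j a := by
      simp only [hFdef] at hFa
      simp [hFa]
    have hle' : ∀ j ∈ Finset.univ, (-1 : ℝ) ≤ p j a := by
      intro j _
      rcases hbool j a ha with h | h <;> rw [h] <;> norm_num
    intro j
    exact ((Finset.sum_eq_sum_iff_of_le hle').mp hsum j (Finset.mem_univ j)).symm
end

section
/- Every critical point of a non-constant multilinear polynomial F : ℝ^n → ℝ is a saddle point: if ∇F(a) = 0 then for every ε > 0 there exist points x, y with ‖x − a‖ < ε, ‖y − a‖ < ε, F(x) > F(a), and F(y) < F(a). -/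
open Finset in
private theorem flip_sum' (n : ℕ) (c : Finset (Fin n) → ℝ) (a x : Fin n → ℝ) :
    ∑ σ : Fin n → Bool, ∑ S : Finset (Fin n), c S * ∏ i ∈ S, (if σ i then 2 * a i - x i else x i)
      = 2^n * ∑ S : Finset (Fin n), c S * ∏ i ∈ S, a i := by
  rw [Finset.sum_comm, Finset.mul_sum]
  refine Finset.sum_congr rfl fun S _ => ?_
  rw [← Finset.mul_sum, mul_comm ((2:ℝ)^n), mul_assoc]
  congr 1
  have h1 : ∀ σ : Fin n → Bool, ∏ i ∈ S, (if σ i then 2 * a i - x i else x i)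
      = ∏ i, (if i ∈ S then (if σ i then 2 * a i - x i else x i) else 1) := by
    intro σ
    rw [Finset.prod_ite_mem, Finset.univ_inter]
  simp_rw [h1]
  rw [← Fintype.prod_sum (fun (i : Fin n) (b : Bool) =>
        if i ∈ S then (if b then 2 * a i - x i else x i) else 1)]
  have h2 : ∀ i : Fin n, (∑ b : Bool, if i ∈ S then (if b then 2 * a i - x i else x i) else 1)
      = 2 * (if i ∈ S then a i else 1) := by
    intro i
    by_cases h : i ∈ S <;> simp [h, Fintype.sum_bool]
  simp_rw [h2]
  rw [Finset.prod_mul_distrib, Finset.prod_const, Finset.prod_ite_mem, Finset.univ_inter]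
  simp [mul_comm, Finset.card_univ]

open MvPolynomial in
private theorem prodX_eq' (n : ℕ) (S : Finset (Fin n)) :
    (∏ i ∈ S, (X i : MvPolynomial (Fin n) ℝ)) = monomial (∑ i ∈ S, Finsupp.single i 1) 1 := by
  classical
  induction S using Finset.induction with
  | empty => simp [monomial_zero']
  | insert _ _ hx ih =>
    rw [Finset.prod_insert hx, Finset.sum_insert hx, ih, X, monomial_mul, one_mul]

open MvPolynomial in
private theorem const_coeff' (n : ℕ) (c : Finset (Fin n) → ℝ) (k : ℝ)
    (h : ∀ z : Fin n → ℝ, ∑ S : Finset (Fin n), c S * ∏ i ∈ S, z i = k)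
    (S₀ : Finset (Fin n)) (hS : S₀ ≠ ∅) : c S₀ = 0 := by
  classical
  set m : Finset (Fin n) → (Fin n →₀ ℕ) := fun S => ∑ i ∈ S, Finsupp.single i 1 with hm
  have hmem : ∀ (S : Finset (Fin n)) (i : Fin n), m S i = if i ∈ S then 1 else 0 := by
    intro S i
    simp only [hm, Finsupp.finset_sum_apply, Finsupp.single_apply]
    rw [Finset.sum_ite_eq' S i (fun _ => 1)]
  have hminj : Function.Injective m := by
    intro S T hST
    ext i
    have := DFunLike.congr_fun hST i
    simp only [hmem] at this
    by_cases hiS : i ∈ S <;> by_cases hiT : i ∈ T <;> simp_all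
  set Φ : MvPolynomial (Fin n) ℝ :=
    ∑ S : Finset (Fin n), MvPolynomial.C (c S) * ∏ i ∈ S, MvPolynomial.X i with hΦ
  have heval : ∀ z : Fin n → ℝ, eval z Φ = eval z (C k) := by
    intro z; simp [hΦ, ← h z]
  have hfun : Φ = C k := MvPolynomial.funext heval
  have hc : coeff (m S₀) Φ = c S₀ := by
    rw [hΦ]
    simp only [coeff_sum, coeff_C_mul, prodX_eq', ← hm, coeff_monomial]
    rw [Finset.sum_eq_single S₀]
    · simp
      intro hne; exact absurd rfl hne
    · intro S _ hSne
      rw [if_neg (fun hEq => absurd (hminj hEq) hSne), mul_zero]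
    · simp
  have hz : coeff (m S₀) (C k : MvPolynomial (Fin n) ℝ) = 0 := by
    rw [coeff_C, if_neg]
    intro h0
    obtain ⟨i, hi⟩ := Finset.nonempty_iff_ne_empty.2 hS
    have := hmem S₀ i
    rw [← h0] at this
    simp [hi] at this
  rw [← hc, hfun, hz]

private theorem const_global' (n : ℕ) (c : Finset (Fin n) → ℝ) (a : Fin n → ℝ) (δ : ℝ)
    (hδ : 0 < δ)
    (h : ∀ z : Fin n → ℝ, (∀ i, |z i - a i| < δ) →
      ∑ S : Finset (Fin n), c S * ∏ i ∈ S, z i = ∑ S : Finset (Fin n), c S * ∏ i ∈ S, a i)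
    (z : Fin n → ℝ) :
    ∑ S : Finset (Fin n), c S * ∏ i ∈ S, z i = ∑ S : Finset (Fin n), c S * ∏ i ∈ S, a i := by
  classical
  set k := ∑ S : Finset (Fin n), c S * ∏ i ∈ S, a i with hk
  set P : Polynomial ℝ := (∑ S : Finset (Fin n), Polynomial.C (c S) *
      ∏ i ∈ S, (Polynomial.C (a i) + Polynomial.C (z i - a i) * Polynomial.X))
      - Polynomial.C k with hP
  have heval : ∀ t : ℝ, P.eval t
      = (∑ S : Finset (Fin n), c S * ∏ i ∈ S, (a i + (z i - a i) * t)) - k := by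
    intro t
    simp [hP, Polynomial.eval_finset_sum, Polynomial.eval_prod]
  set M : ℝ := (∑ i, |z i - a i|) + 1 with hM
  have hM0 : 0 < M := by positivity
  have hbound : ∀ i, |z i - a i| < M := by
    intro i
    have h1 : |z i - a i| ≤ ∑ j, |z j - a j| :=
      Finset.single_le_sum (f := fun j => |z j - a j|) (fun _ _ => abs_nonneg _)
        (Finset.mem_univ i)
    linarith
  have hroot : ∀ t ∈ Set.Ioo (0:ℝ) (δ / M), P.IsRoot t := by
    intro t ht
    obtain ⟨ht0, ht1⟩ := ht
    have hcl : ∀ i, |a i + (z i - a i) * t - a i| < δ := by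
      intro i
      rw [add_sub_cancel_left, abs_mul, abs_of_pos ht0]
      have h2 : t * M < δ := (lt_div_iff₀ hM0).mp ht1
      nlinarith [abs_nonneg (z i - a i), hbound i]
    rw [Polynomial.IsRoot, heval, h _ hcl, sub_self]
  have hPzero : P = 0 := by
    refine P.eq_zero_of_infinite_isRoot ?_
    refine Set.Infinite.mono (fun t ht => hroot t ht) (Set.Ioo_infinite (by positivity))
  have h1 := heval 1
  rw [hPzero] at h1
  simp only [Polynomial.eval_zero] at h1
  have hz2 : ∀ i, a i + (z i - a i) * 1 = z i := fun i => by ring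
  simp_rw [hz2] at h1
  linarith

noncomputable def flipPt' (n : ℕ) (a x : EuclideanSpace ℝ (Fin n)) (σ : Fin n → Bool) :
    EuclideanSpace ℝ (Fin n) :=
  (WithLp.equiv 2 (Fin n → ℝ)).symm (fun i => if σ i then 2 * a i - x i else x i)

private theorem flipPt_norm' (n : ℕ) (a x : EuclideanSpace ℝ (Fin n)) (σ : Fin n → Bool) :
    ‖flipPt' n a x σ - a‖ = ‖x - a‖ := by
  rw [EuclideanSpace.norm_eq, EuclideanSpace.norm_eq]
  congr 1
  refine Finset.sum_congr rfl fun i _ => ?_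
  simp only [PiLp.sub_apply]
  show ‖(if σ i then 2 * a i - x i else x i) - a i‖ ^ 2 = _
  by_cases h : σ i
  · simp only [h, if_true]
    rw [show 2 * a i - x i - a i = -(x i - a i) by ring, norm_neg]
  · simp [h]

private theorem exists_gt' (n : ℕ) (c : Finset (Fin n) → ℝ) (a x : EuclideanSpace ℝ (Fin n))
    (hlt : ∑ S : Finset (Fin n), c S * ∏ i ∈ S, x i
      < ∑ S : Finset (Fin n), c S * ∏ i ∈ S, a i) :
    ∃ y : EuclideanSpace ℝ (Fin n), ‖y - a‖ = ‖x - a‖ ∧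
      ∑ S : Finset (Fin n), c S * ∏ i ∈ S, a i
        < ∑ S : Finset (Fin n), c S * ∏ i ∈ S, y i := by
  by_contra hc
  push_neg at hc
  have h2 : (∑ σ : Fin n → Bool, ∑ S : Finset (Fin n), c S * ∏ i ∈ S, flipPt' n a x σ i)
      = 2^n * ∑ S : Finset (Fin n), c S * ∏ i ∈ S, a i := flip_sum' n c a x
  have hstrict : (∑ σ : Fin n → Bool, ∑ S : Finset (Fin n), c S * ∏ i ∈ S, flipPt' n a x σ i)
      < ∑ σ : Fin n → Bool, ∑ S : Finset (Fin n), c S * ∏ i ∈ S, a i := by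
    apply Finset.sum_lt_sum
    · intro σ _
      exact hc _ (flipPt_norm' n a x σ)
    · refine ⟨(fun _ => false), Finset.mem_univ _, ?_⟩
      have hfx : flipPt' n a x (fun _ => false) = x := rfl
      rw [hfx]
      exact hlt
  rw [h2, Finset.sum_const, Finset.card_univ] at hstrict
  simp only [nsmul_eq_mul, Fintype.card_fun, Fintype.card_bool, Fintype.card_fin,
    Nat.cast_pow, Nat.cast_ofNat] at hstrict
  exact lt_irrefl _ hstrict

/-- Every critical point of a non-constant multilinear polynomial is a saddle
point: arbitrarily close to it there are points with strictly larger and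
strictly smaller values. -/
theorem stmt_5 (n : ℕ) (F : EuclideanSpace ℝ (Fin n) → ℝ)
    (c : Finset (Fin n) → ℝ)
    (hF : ∀ x, F x = ∑ S : Finset (Fin n), c S * ∏ i ∈ S, x i)
    (hnc : ∃ S : Finset (Fin n), S ≠ ∅ ∧ c S ≠ 0)
    (a : EuclideanSpace ℝ (Fin n)) (hcrit : fderiv ℝ F a = 0) :
    ∀ ε > (0 : ℝ), ∃ x y : EuclideanSpace ℝ (Fin n),
      ‖x - a‖ < ε ∧ ‖y - a‖ < ε ∧ F x > F a ∧ F y < F a := by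
  intro ε hε
  by_cases hconst : ∀ z : EuclideanSpace ℝ (Fin n), ‖z - a‖ < ε → F z = F a
  · exfalso
    obtain ⟨S₀, hS₀, hc₀⟩ := hnc
    set δ := ε / (Real.sqrt n + 1) with hδdef
    have hs0 : (0:ℝ) ≤ Real.sqrt n := Real.sqrt_nonneg _
    have hδ : 0 < δ := by positivity
    have hball : ∀ z : Fin n → ℝ, (∀ i, |z i - a i| < δ) →
        ∑ S : Finset (Fin n), c S * ∏ i ∈ S, z i
          = ∑ S : Finset (Fin n), c S * ∏ i ∈ S, (a : Fin n → ℝ) i := by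
      intro z hz
      have hnorm : ‖((WithLp.equiv 2 (Fin n → ℝ)).symm z) - a‖ < ε := by
        rw [EuclideanSpace.norm_eq]
        have hb : ∀ i, ‖((WithLp.equiv 2 (Fin n → ℝ)).symm z - a) i‖ ^ 2 ≤ δ ^ 2 := by
          intro i
          have : ‖((WithLp.equiv 2 (Fin n → ℝ)).symm z - a) i‖ = |z i - a i| := rfl
          rw [this]
          have := (hz i).le
          nlinarith [abs_nonneg (z i - a i)]
        have hsum : ∑ i, ‖((WithLp.equiv 2 (Fin n → ℝ)).symm z - a) i‖ ^ 2
            ≤ (n : ℝ) * δ ^ 2 := by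
          calc ∑ i, ‖((WithLp.equiv 2 (Fin n → ℝ)).symm z - a) i‖ ^ 2
              ≤ ∑ _i : Fin n, δ ^ 2 := Finset.sum_le_sum fun i _ => hb i
            _ = (n : ℝ) * δ ^ 2 := by simp [mul_comm]
        calc Real.sqrt (∑ i, ‖((WithLp.equiv 2 (Fin n → ℝ)).symm z - a) i‖ ^ 2)
            ≤ Real.sqrt ((n : ℝ) * δ ^ 2) := Real.sqrt_le_sqrt hsum
          _ = Real.sqrt n * δ := by
              rw [Real.sqrt_mul (Nat.cast_nonneg n), Real.sqrt_sq hδ.le]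
          _ < ε := by
              rw [hδdef, mul_div_assoc', div_lt_iff₀ (by positivity)]
              nlinarith
      have := hconst _ hnorm
      rw [hF, hF] at this
      exact this
    have hcst := const_global' n c a δ hδ hball
    exact hc₀ (const_coeff' n c _ hcst S₀ hS₀)
  · push_neg at hconst
    obtain ⟨x0, hx0n, hx0⟩ := hconst
    rw [hF x0, hF a] at hx0
    rcases lt_or_gt_of_ne hx0 with h | h
    · obtain ⟨y, hyn, hy⟩ := exists_gt' n c a x0 h
      exact ⟨y, x0, by rw [hyn]; exact hx0n, hx0n,
        by rw [hF y, hF a]; exact hy, by rw [hF x0, hF a]; exact h⟩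
    · have h' : ∑ S : Finset (Fin n), (-c S) * ∏ i ∈ S, x0 i
          < ∑ S : Finset (Fin n), (-c S) * ∏ i ∈ S, a i := by
        simp only [neg_mul, Finset.sum_neg_distrib]
        exact neg_lt_neg h
      obtain ⟨y, hyn, hy⟩ := exists_gt' n (fun S => -c S) a x0 h'
      simp only [neg_mul, Finset.sum_neg_distrib, neg_lt_neg_iff] at hy
      exact ⟨x0, y, hx0n, by rw [hyn]; exact hx0n,
        by rw [hF x0, hF a]; exact h, by rw [hF y, hF a]; exact hy⟩
end

section
/- For every non-constant multilinear polynomial F : ℝ^n → ℝ with F(0) = 0, there exist vectors v⁺, v⁻ ∈ ℝ^n and ε > 0 such that for all δ with 0 < δ < ε, F(δ·v⁺) > 0 and F(δ·v⁻) < 0. -/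
/-- For a non-constant multilinear polynomial `F` with `F 0 = 0`, there are
directions `v⁺, v⁻` and `ε > 0` so that moving distance `δ < ε` along `v⁺`
gives a positive value and along `v⁻` a negative value. -/
theorem stmt_6 (n : ℕ) (F : (Fin n → ℝ) → ℝ) (c : Finset (Fin n) → ℝ)
    (hF : ∀ x, F x = ∑ S : Finset (Fin n), c S * ∏ i ∈ S, x i)
    (hnc : ∃ S : Finset (Fin n), S ≠ ∅ ∧ c S ≠ 0)
    (h0 : F 0 = 0) :
    ∃ (vp vm : Fin n → ℝ) (ε : ℝ), 0 < ε ∧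
      ∀ δ : ℝ, 0 < δ → δ < ε → F (δ • vp) > 0 ∧ F (δ • vm) < 0 := by
  classical
  obtain ⟨S1, hS1ne, hS1c⟩ := hnc
  -- c ∅ = 0
  have hc0 : c ∅ = 0 := by
    have h := h0
    rw [hF] at h
    rw [Finset.sum_eq_single (∅ : Finset (Fin n))] at h
    · simpa using h
    · intro S _ hS
      obtain ⟨i, hi⟩ := Finset.nonempty_iff_ne_empty.mpr hS
      rw [Finset.prod_eq_zero hi (by simp : (0 : Fin n → ℝ) i = 0), mul_zero]
    · intro h'; exact absurd (Finset.mem_univ _) h'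
  set T := Finset.univ.filter (fun S : Finset (Fin n) => S ≠ ∅ ∧ c S ≠ 0) with hT
  have hS1T : S1 ∈ T := by simp [hT, hS1ne, hS1c]
  obtain ⟨S₀, hS₀T, hmin⟩ := T.exists_min_image Finset.card ⟨S1, hS1T⟩
  have hS₀ne : S₀ ≠ ∅ := (Finset.mem_filter.mp hS₀T).2.1
  have hS₀c : c S₀ ≠ 0 := (Finset.mem_filter.mp hS₀T).2.2
  obtain ⟨i₀, hi₀⟩ := Finset.nonempty_iff_ne_empty.mpr hS₀ne
  have key : ∀ s δ : ℝ,
      F (δ • (fun i => if i ∈ S₀ then (if i = i₀ then s else 1) else 0)) =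
        c S₀ * s * δ ^ S₀.card := by
    intro s δ
    rw [hF, Finset.sum_eq_single S₀]
    · have hprod : (∏ i ∈ S₀,
          (δ • (fun i => if i ∈ S₀ then (if i = i₀ then s else 1) else 0)) i) =
          δ ^ S₀.card * s := by
        have : ∀ i ∈ S₀,
            (δ • (fun i => if i ∈ S₀ then (if i = i₀ then s else 1) else 0)) i =
            δ * (if i = i₀ then s else 1) := by
          intro i hi; simp [hi]
        rw [Finset.prod_congr rfl this, Finset.prod_mul_distrib,
          Finset.prod_const, Finset.prod_ite_eq' S₀ i₀ (fun _ => s), if_pos hi₀]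
      rw [hprod]; ring
    · intro S _ hS
      by_cases hcS : c S = 0
      · simp [hcS]
      by_cases hsub : S ⊆ S₀
      · by_cases hSe : S = ∅
        · subst hSe; exact absurd hc0 hcS
        · have hST : S ∈ T := by simp [hT, hSe, hcS]
          have h1 := hmin S hST
          have h2 : S₀.card ≤ S.card := h1
          have h3 : S.card < S₀.card :=
            Finset.card_lt_card (lt_of_le_of_ne hsub hS)
          omega
      · obtain ⟨i, hiS, hiS₀⟩ := Finset.not_subset.mp hsub
        rw [Finset.prod_eq_zero hiS (by simp [hiS₀]), mul_zero]
    · intro h'; exact absurd (Finset.mem_univ _) h'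
  rcases lt_or_gt_of_ne hS₀c with hneg | hpos
  · refine ⟨(fun i => if i ∈ S₀ then (if i = i₀ then (-1 : ℝ) else 1) else 0),
      (fun i => if i ∈ S₀ then (if i = i₀ then (1 : ℝ) else 1) else 0), 1, one_pos, ?_⟩
    intro δ hδ _
    have hpow : 0 < δ ^ S₀.card := pow_pos hδ _
    constructor
    · rw [key]; nlinarith
    · rw [key]; nlinarith
  · refine ⟨(fun i => if i ∈ S₀ then (if i = i₀ then (1 : ℝ) else 1) else 0),
      (fun i => if i ∈ S₀ then (if i = i₀ then (-1 : ℝ) else 1) else 0), 1, one_pos, ?_⟩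
    intro δ hδ _
    have hpow : 0 < δ ^ S₀.card := pow_pos hδ _
    constructor
    · rw [key]; nlinarith
    · rw [key]; nlinarith
end

section
/- Let F be a multilinear polynomial that is a sum of Fourier expansions of clauses of a Boolean formula, and suppose a* ∈ [-1,1]^n is a local minimum of F on [-1,1]^n. Then a* is feasible: fixing the coordinates of a* lying in {-1,1} to their values makes F a constant function of the remaining coordinates. -/
open Finset

/-- Multilinear sum over subsets of `s`. -/
noncomputable def mlinOn {n : ℕ} (s : Finset (Fin n)) (c : Finset (Fin n) → ℝ)
    (x : Fin n → ℝ) : ℝ :=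
  ∑ S ∈ s.powerset, c S * ∏ i ∈ S, x i

lemma mlinOn_congr {n : ℕ} {s : Finset (Fin n)} (c : Finset (Fin n) → ℝ)
    {x y : Fin n → ℝ} (h : ∀ j ∈ s, x j = y j) : mlinOn s c x = mlinOn s c y := by
  refine Finset.sum_congr rfl fun S hS => ?_
  rw [Finset.mem_powerset] at hS
  exact congrArg _ (Finset.prod_congr rfl fun j hj => h j (hS hj))

lemma mlinOn_insert {n : ℕ} {i : Fin n} {s : Finset (Fin n)} (hi : i ∉ s)
    (c : Finset (Fin n) → ℝ) (x : Fin n → ℝ) :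
    mlinOn (insert i s) c x
      = mlinOn s c x + x i * mlinOn s (fun S => c (insert i S)) x := by
  unfold mlinOn
  rw [Finset.sum_powerset_insert hi, Finset.mul_sum]
  congr 1
  refine Finset.sum_congr rfl fun S hS => ?_
  rw [Finset.mem_powerset] at hS
  have hiS : i ∉ S := fun h => hi (hS h)
  rw [Finset.prod_insert hiS]; ring

/-- Key lemma: a local minimum of a multilinear function, where only the coordinates
in `I` may be perturbed, forces the function to be constant in the `I`-coordinates. -/
lemma key_mlin {n : ℕ} (I : Finset (Fin n)) :
    ∀ (c : Finset (Fin n) → ℝ) (a : Fin n → ℝ) (δ : ℝ), 0 < δ →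
    (∀ x : Fin n → ℝ, (∀ i, i ∉ I → x i = a i) → (∀ i, |x i - a i| ≤ δ) →
      mlinOn Finset.univ c a ≤ mlinOn Finset.univ c x) →
    ∀ y : Fin n → ℝ, (∀ i, i ∉ I → y i = a i) →
      mlinOn Finset.univ c y = mlinOn Finset.univ c a := by
  classical
  induction I using Finset.induction_on with
  | empty =>
      intro c a δ hδ hmin y hy
      have : y = a := funext fun i => hy i (Finset.notMem_empty i)
      rw [this]
  | @insert i s hi ih =>
      intro c a δ hδ hmin y hy
      have hiE : i ∉ Finset.univ.erase i := Finset.notMem_erase i _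
      have hins : insert i (Finset.univ.erase i) = (Finset.univ : Finset (Fin n)) :=
        Finset.insert_erase (Finset.mem_univ i)
      set A : (Fin n → ℝ) → ℝ := mlinOn (Finset.univ.erase i) c with hA
      set B : (Fin n → ℝ) → ℝ := mlinOn (Finset.univ.erase i) (fun S => c (insert i S)) with hB
      have decomp : ∀ x : Fin n → ℝ, mlinOn Finset.univ c x = A x + x i * B x := by
        intro x; rw [← hins, mlinOn_insert hiE]
      -- A and B ignore coordinate i
      have hAind : ∀ (x z : Fin n → ℝ), (∀ j, j ≠ i → x j = z j) → A x = A z := by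
        intro x z h
        exact mlinOn_congr _ fun j hj => h j (Finset.ne_of_mem_erase hj)
      have hBind : ∀ (x z : Fin n → ℝ), (∀ j, j ≠ i → x j = z j) → B x = B z := by
        intro x z h
        exact mlinOn_congr _ fun j hj => h j (Finset.ne_of_mem_erase hj)
      have hAu : ∀ (x : Fin n → ℝ) (v : ℝ), A (Function.update x i v) = A x :=
        fun x v => hAind _ _ fun j hj => Function.update_of_ne hj _ _
      have hBu : ∀ (x : Fin n → ℝ) (v : ℝ), B (Function.update x i v) = B x :=
        fun x v => hBind _ _ fun j hj => Function.update_of_ne hj _ _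
      -- Step 1: B a = 0
      have hBa : B a = 0 := by
        have key1 : ∀ t : ℝ, |t| ≤ δ → A a + a i * B a ≤ A a + (a i + t) * B a := by
          intro t ht
          have h1 := hmin (Function.update a i (a i + t))
            (fun j hj => Function.update_of_ne
              (fun h => hj (by rw [h]; exact Finset.mem_insert_self i s)) _ _)
            (by
              intro j
              by_cases hji : j = i
              · subst hji; rw [Function.update_self]; simpa using ht
              · rw [Function.update_of_ne hji]; simpa using hδ.le)
          rw [decomp, decomp, hAu a (a i + t), hBu a (a i + t), Function.update_self] at h1
          exact h1
        have h1 := key1 δ (by rw [abs_of_pos hδ])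
        have h2 := key1 (-δ) (by rw [abs_neg, abs_of_pos hδ])
        have hp : 0 ≤ δ * B a := by nlinarith
        have hn : δ * B a ≤ 0 := by nlinarith
        rcases mul_eq_zero.mp (le_antisymm hn hp) with h | h
        · exact absurd h (ne_of_gt hδ)
        · exact h
      -- coefficients of the slice function g_t
      have hgt : ∀ (t : ℝ) (x : Fin n → ℝ),
          mlinOn Finset.univ
            (fun S => if i ∈ S then 0 else c S + (a i + t) * c (insert i S)) x
            = A x + (a i + t) * B x := by
        intro t x
        rw [← hins, mlinOn_insert hiE]
        have e2 : mlinOn (Finset.univ.erase i) (fun S =>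
            if i ∈ insert i S then 0
            else c (insert i S) + (a i + t) * c (insert i (insert i S))) x = 0 := by
          refine Finset.sum_eq_zero fun S hS => ?_
          simp
        rw [e2, mul_zero, add_zero, hA, hB]
        unfold mlinOn
        rw [Finset.mul_sum, ← Finset.sum_add_distrib]
        refine Finset.sum_congr rfl fun S hS => ?_
        rw [Finset.mem_powerset] at hS
        have hiS : i ∉ S := fun h => hiE (hS h)
        simp only [if_neg hiS]
        ring
      -- Step 2: apply induction hypothesis to the slices t = 0 and t = δ
      have hslice : ∀ t : ℝ, |t| ≤ δ → ∀ y' : Fin n → ℝ, (∀ j, j ∉ s → y' j = a j) →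
          A y' + (a i + t) * B y' = A a := by
        intro t ht y' hy'
        have hmin' : ∀ x : Fin n → ℝ, (∀ j, j ∉ s → x j = a j) → (∀ j, |x j - a j| ≤ δ) →
            mlinOn Finset.univ
              (fun S => if i ∈ S then 0 else c S + (a i + t) * c (insert i S)) a
            ≤ mlinOn Finset.univ
              (fun S => if i ∈ S then 0 else c S + (a i + t) * c (insert i S)) x := by
          intro x hx1 hx2
          have h1 := hmin (Function.update x i (a i + t))
            (by
              intro j hj
              have hji : j ≠ i := fun h => hj (h ▸ Finset.mem_insert_self i s)
              rw [Function.update_of_ne hji]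
              exact hx1 j fun h => hj (Finset.mem_insert_of_mem h))
            (by
              intro j
              by_cases hji : j = i
              · subst hji; rw [Function.update_self]; simpa using ht
              · rw [Function.update_of_ne hji]; exact hx2 j)
          rw [decomp, decomp, hAu x (a i + t), hBu x (a i + t), Function.update_self] at h1
          rw [hgt, hgt]
          rw [hBa, mul_zero, add_zero] at h1 ⊢
          linarith [h1]
        have := ih (fun S => if i ∈ S then 0 else c S + (a i + t) * c (insert i S))
          a δ hδ hmin' y' hy'
        rw [hgt, hgt, hBa, mul_zero, add_zero] at this
        exact this
      -- Step 3: conclude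
      have hyts : ∀ j, j ∉ s → Function.update y i (a i) j = a j := by
        intro j hj
        by_cases hji : j = i
        · subst hji; rw [Function.update_self]
        · rw [Function.update_of_ne hji]
          exact hy j (by simp [hji, hj])
      have h0 := hslice 0 (by simpa using hδ.le) _ hyts
      have h1 := hslice δ (by rw [abs_of_pos hδ]) _ hyts
      have hByt : B (Function.update y i (a i)) = 0 := by
        have : δ * B (Function.update y i (a i)) = 0 := by linarith
        rcases mul_eq_zero.mp this with h | h
        · exact absurd h (ne_of_gt hδ)
        · exact h
      have hAyt : A (Function.update y i (a i)) = A a := by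
        rw [hByt, mul_zero, add_zero] at h0; linarith
      rw [decomp y, decomp a, hBa, mul_zero, add_zero, ← hAu y (a i), ← hBu y (a i),
        hByt, mul_zero, add_zero, hAyt]

/-- Any local minimum `a*` on the cube `[-1,1]^n` of a sum `F` of Fourier
expansions of Boolean clauses is feasible: fixing the `±1` coordinates of `a*`
makes `F` constant in the remaining coordinates. -/
theorem stmt_7 (n m : ℕ) (p : Fin m → EuclideanSpace ℝ (Fin n) → ℝ)
    (hml : ∀ j, ∃ c : Finset (Fin n) → ℝ,
      ∀ x : EuclideanSpace ℝ (Fin n), p j x = ∑ S : Finset (Fin n), c S * ∏ i ∈ S, x i)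
    (hbool : ∀ j, ∀ a : EuclideanSpace ℝ (Fin n), (∀ i, a i = 1 ∨ a i = -1) →
      p j a = 1 ∨ p j a = -1)
    (F : EuclideanSpace ℝ (Fin n) → ℝ) (hF : ∀ x, F x = ∑ j, p j x)
    (a : EuclideanSpace ℝ (Fin n)) (ha : ∀ i, a i ∈ Set.Icc (-1 : ℝ) 1)
    (hloc : ∃ δ > (0 : ℝ), ∀ x : EuclideanSpace ℝ (Fin n),
      (∀ i, x i ∈ Set.Icc (-1 : ℝ) 1) → ‖x - a‖ ≤ δ → F a ≤ F x) :
    ∀ y : EuclideanSpace ℝ (Fin n), (∀ i, y i ∈ Set.Icc (-1 : ℝ) 1) →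
      (∀ i, (a i = 1 ∨ a i = -1) → y i = a i) → F y = F a := by
  classical
  obtain ⟨δ, hδ, hloc'⟩ := hloc
  choose cj hcj using hml
  set c : Finset (Fin n) → ℝ := fun S => ∑ j, cj j S with hc
  have hFc : ∀ x : EuclideanSpace ℝ (Fin n), F x = mlinOn Finset.univ c x := by
    intro x
    rw [hF x]
    unfold mlinOn
    rw [Finset.powerset_univ]
    calc ∑ j, p j x = ∑ j, ∑ S : Finset (Fin n), cj j S * ∏ i ∈ S, x i :=
          Finset.sum_congr rfl fun j _ => hcj j x
      _ = ∑ S : Finset (Fin n), ∑ j, cj j S * ∏ i ∈ S, x i := Finset.sum_comm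
      _ = ∑ S : Finset (Fin n), c S * ∏ i ∈ S, x i :=
          Finset.sum_congr rfl fun S _ => (Finset.sum_mul _ _ _).symm
  -- free coordinate set
  set I : Finset (Fin n) := Finset.univ.filter (fun i => ¬(a i = 1 ∨ a i = -1)) with hI
  have hInot : ∀ i, i ∉ I ↔ (a i = 1 ∨ a i = -1) := by
    intro i; simp [hI]
    tauto
  -- small radius δ₀
  set ε : ℝ := if h : I.Nonempty then I.inf' h (fun i => min (1 - a i) (a i + 1)) else 1
    with hε
  have hεpos : 0 < ε := by
    rw [hε]
    split_ifs with h
    · rw [Finset.lt_inf'_iff]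
      intro i hiI
      have h1 : a i ≠ 1 ∧ a i ≠ -1 := by
        simp [hI] at hiI; tauto
      obtain ⟨hle1, hle2⟩ := ha i
      rw [lt_min_iff]
      constructor
      · rcases lt_or_eq_of_le hle2 with h | h
        · linarith
        · exact absurd h h1.1
      · rcases lt_or_eq_of_le hle1 with h | h
        · linarith
        · exact absurd h.symm h1.2
    · norm_num
  have hεle : ∀ i ∈ I, ε ≤ min (1 - a i) (a i + 1) := by
    intro i hiI
    rw [hε, dif_pos ⟨i, hiI⟩]
    exact Finset.inf'_le _ hiI
  set δ₀ : ℝ := min (δ / (n + 1)) ε with hδ₀def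
  have hδ₀pos : 0 < δ₀ := by
    rw [hδ₀def, lt_min_iff]
    refine ⟨div_pos hδ (by positivity), hεpos⟩
  -- the local minimality hypothesis for the key lemma
  have hmin : ∀ x : Fin n → ℝ, (∀ i, i ∉ I → x i = a i) → (∀ i, |x i - a i| ≤ δ₀) →
      mlinOn Finset.univ c a ≤ mlinOn Finset.univ c x := by
    intro x hx1 hx2
    have hcube : ∀ i, x i ∈ Set.Icc (-1 : ℝ) 1 := by
      intro i
      by_cases hiI : i ∈ I
      · have h1 := hεle i hiI
        have h2 := hx2 i
        have h3 : δ₀ ≤ ε := min_le_right _ _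
        rw [abs_le] at h2
        rw [le_min_iff] at h1
        constructor <;> [linarith; linarith]
      · rw [hx1 i hiI]; exact ha i
    have hnorm : ‖(WithLp.toLp 2 x : EuclideanSpace ℝ (Fin n)) - a‖ ≤ δ := by
      rw [EuclideanSpace.norm_eq]
      have hsum : (∑ i, ‖((WithLp.toLp 2 x : EuclideanSpace ℝ (Fin n)) - a) i‖ ^ 2)
          ≤ ∑ _i : Fin n, δ₀ ^ 2 := by
        refine Finset.sum_le_sum fun i _ => ?_
        have : ‖((WithLp.toLp 2 x : EuclideanSpace ℝ (Fin n)) - a) i‖ = |x i - a i| := rfl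
        rw [this]
        have := hx2 i
        have habs : (0:ℝ) ≤ |x i - a i| := abs_nonneg _
        nlinarith
      calc Real.sqrt (∑ i, ‖((WithLp.toLp 2 x : EuclideanSpace ℝ (Fin n)) - a) i‖ ^ 2)
          ≤ Real.sqrt (∑ _i : Fin n, δ₀ ^ 2) := Real.sqrt_le_sqrt hsum
        _ ≤ Real.sqrt (((n : ℝ) + 1) ^ 2 * δ₀ ^ 2) := by
            apply Real.sqrt_le_sqrt
            rw [Finset.sum_const, Finset.card_univ, Fintype.card_fin, nsmul_eq_mul]
            have h1 : (n : ℝ) ≤ ((n : ℝ) + 1) ^ 2 := by nlinarith [sq_nonneg ((n:ℝ))]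
            nlinarith [sq_nonneg δ₀]
        _ = ((n : ℝ) + 1) * δ₀ := by
            rw [← mul_pow, Real.sqrt_sq (by positivity)]
        _ ≤ δ := by
            have h1 : δ₀ ≤ δ / (n + 1) := min_le_left _ _
            have h2 : (0:ℝ) < (n : ℝ) + 1 := by positivity
            calc ((n : ℝ) + 1) * δ₀ ≤ ((n : ℝ) + 1) * (δ / (n + 1)) := by
                  exact mul_le_mul_of_nonneg_left h1 h2.le
              _ = δ := by field_simp
    have := hloc' (WithLp.toLp 2 x : EuclideanSpace ℝ (Fin n)) hcube hnorm
    rwa [hFc a, hFc (WithLp.toLp 2 x)] at this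
  intro y hy1 hy2
  rw [hFc y, hFc a]
  exact key_mlin I c a δ₀ hδ₀pos hmin y fun i hiI => hy2 i ((hInot i).mp hiI)
end

section
/- Let F : [-1,1]^n → ℝ be a multilinear polynomial with |F(x)| ≤ m for all x ∈ [-1,1]^n. Then for all x, y ∈ [-1,1]^n, |F(x) − F(y)| ≤ m·√n·‖x − y‖₂. -/
/-- A multilinear polynomial bounded by `m` on the cube `[-1,1]^n` is
`(m√n)`-Lipschitz on the cube (Euclidean norm). -/
theorem stmt_10 (n : ℕ) (m : ℝ) (F : EuclideanSpace ℝ (Fin n) → ℝ)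
    (c : Finset (Fin n) → ℝ)
    (hF : ∀ x, F x = ∑ S : Finset (Fin n), c S * ∏ i ∈ S, x i)
    (hbd : ∀ x : EuclideanSpace ℝ (Fin n), (∀ i, x i ∈ Set.Icc (-1 : ℝ) 1) → |F x| ≤ m) :
    ∀ x y : EuclideanSpace ℝ (Fin n),
      (∀ i, x i ∈ Set.Icc (-1 : ℝ) 1) → (∀ i, y i ∈ Set.Icc (-1 : ℝ) 1) →
      |F x - F y| ≤ m * Real.sqrt n * ‖x - y‖ := by
  classical
  intro x y hx hy
  have hm : 0 ≤ m := by
    refine le_trans (abs_nonneg _) (hbd 0 ?_)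
    intro i
    have : (0 : EuclideanSpace ℝ (Fin n)) i = 0 := rfl
    rw [this]
    constructor <;> norm_num
  -- key single-coordinate Lipschitz bound
  have key : ∀ w : EuclideanSpace ℝ (Fin n), (∀ i, w i ∈ Set.Icc (-1:ℝ) 1) →
      ∀ (i : Fin n) (s t : ℝ),
      |F (WithLp.toLp 2 (Function.update w i s)) - F (WithLp.toLp 2 (Function.update w i t))| ≤ m * |s - t| := by
    intro w hw i s t
    set a := ∑ S ∈ Finset.univ.filter (fun S : Finset (Fin n) => i ∉ S),
      c S * ∏ j ∈ S, w j with ha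
    set b := ∑ S ∈ Finset.univ.filter (fun S : Finset (Fin n) => i ∈ S),
      c S * ∏ j ∈ S.erase i, w j with hb
    have hlin : ∀ u : ℝ, F (WithLp.toLp 2 (Function.update w i u)) = a + b * u := by
      intro u
      rw [hF]
      simp only [WithLp.ofLp_toLp]
      rw [← Finset.sum_filter_add_sum_filter_not Finset.univ
        (fun S : Finset (Fin n) => i ∈ S)
        (fun S => c S * ∏ j ∈ S, Function.update w i u j)]
      rw [add_comm]
      congr 1
      · apply Finset.sum_congr rfl
        intro S hS
        simp only [Finset.mem_filter] at hS
        congr 1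
        apply Finset.prod_congr rfl
        intro j hj
        exact Function.update_of_ne (by rintro rfl; exact hS.2 hj) _ _
      · rw [hb, Finset.sum_mul]
        apply Finset.sum_congr rfl
        intro S hS
        simp only [Finset.mem_filter] at hS
        rw [mul_assoc]
        congr 1
        rw [← Finset.prod_erase_mul S _ hS.2]
        congr 1
        · apply Finset.prod_congr rfl
          intro j hj
          exact Function.update_of_ne (Finset.ne_of_mem_erase hj) _ _
        · simp
    have hmem : ∀ u : ℝ, u ∈ Set.Icc (-1:ℝ) 1 →
        ∀ j, Function.update w i u j ∈ Set.Icc (-1:ℝ) 1 := by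
      intro u hu j
      rcases eq_or_ne j i with rfl | h
      · simpa using hu
      · simpa [Function.update_of_ne h] using hw j
    have h1 : |a + b| ≤ m := by
      have := hbd (WithLp.toLp 2 (Function.update w i 1)) (hmem 1 (by constructor <;> norm_num))
      rwa [hlin 1, mul_one] at this
    have h2 : |a - b| ≤ m := by
      have := hbd (WithLp.toLp 2 (Function.update w i (-1))) (hmem (-1) (by constructor <;> norm_num))
      rw [hlin (-1)] at this
      have e : a + b * (-1) = a - b := by ring
      rwa [e] at this
    have hbm : |b| ≤ m := by
      rw [abs_le] at h1 h2 ⊢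
      constructor <;> linarith
    have e : F (WithLp.toLp 2 (Function.update w i s)) - F (WithLp.toLp 2 (Function.update w i t)) = b * (s - t) := by
      rw [hlin s, hlin t]; ring
    rw [e, abs_mul]
    exact mul_le_mul_of_nonneg_right hbm (abs_nonneg _)
  -- hybrid points
  set z : ℕ → EuclideanSpace ℝ (Fin n) :=
    fun k => WithLp.toLp 2 (fun i : Fin n => if (i : ℕ) < k then y i else x i) with hz
  have hzmem : ∀ k, ∀ i, z k i ∈ Set.Icc (-1:ℝ) 1 := by
    intro k i
    by_cases h : (i : ℕ) < k
    · simpa [hz, h] using hy i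
    · simpa [hz, h] using hx i
  have hz0 : z 0 = x := by ext i; simp [hz]
  have hzn : z n = y := by ext i; simp [hz, i.isLt]
  have step : ∀ j ∈ Finset.range n, |F (z j) - F (z (j+1))| ≤
      m * (if h : j < n then |x ⟨j, h⟩ - y ⟨j, h⟩| else 0) := by
    intro j hj
    rw [Finset.mem_range] at hj
    rw [dif_pos hj]
    set i : Fin n := ⟨j, hj⟩ with hi
    have e1 : z j = WithLp.toLp 2 (Function.update (z j) i (x i)) := by
      ext k
      simp only [WithLp.ofLp_toLp]
      rcases eq_or_ne k i with rfl | h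
      · rw [Function.update_self]
        show (if (j : ℕ) < j then y i else x i) = x i
        exact if_neg (lt_irrefl j)
      · rw [Function.update_of_ne h]
    have e2 : z (j+1) = WithLp.toLp 2 (Function.update (z j) i (y i)) := by
      ext k
      simp only [WithLp.ofLp_toLp]
      rcases eq_or_ne k i with rfl | h
      · rw [Function.update_self]
        show (if (j : ℕ) < j + 1 then y i else x i) = y i
        exact if_pos (Nat.lt_succ_self j)
      · rw [Function.update_of_ne h]
        have hk : (k : ℕ) ≠ j := by
          intro hkj
          exact h (Fin.ext (by simp [hi, hkj]))
        show (if (k : ℕ) < j + 1 then y k else x k) = (if (k : ℕ) < j then y k else x k)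
        rcases lt_or_ge (k : ℕ) j with hlt | hge
        · rw [if_pos (by omega), if_pos hlt]
        · rw [if_neg (by omega), if_neg (by omega)]
    calc |F (z j) - F (z (j+1))|
        = |F (WithLp.toLp 2 (Function.update (z j) i (x i))) - F (WithLp.toLp 2 (Function.update (z j) i (y i)))| := by
          rw [← e1, ← e2]
      _ ≤ m * |x i - y i| := key (z j) (hzmem j) i _ _
  have tele : F x - F y = ∑ j ∈ Finset.range n, (F (z j) - F (z (j+1))) := by
    rw [Finset.sum_range_sub' (fun j => F (z j)) n, hz0, hzn]
  have hCS : ∑ i : Fin n, |x i - y i| ≤ Real.sqrt n * ‖x - y‖ := by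
    have hnorm : ‖x - y‖ = Real.sqrt (∑ i : Fin n, (x i - y i) ^ 2) := by
      rw [EuclideanSpace.norm_eq]
      congr 1
      apply Finset.sum_congr rfl
      intro i _
      simp [PiLp.sub_apply, Real.norm_eq_abs, sq_abs]
    rw [hnorm, ← Real.sqrt_mul (Nat.cast_nonneg n)]
    have h1 : (∑ i : Fin n, |x i - y i|) ^ 2 ≤ n * ∑ i : Fin n, (x i - y i) ^ 2 := by
      have := sq_sum_le_card_mul_sum_sq (s := Finset.univ) (f := fun i : Fin n => |x i - y i|)
      simpa [sq_abs] using this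
    have h2 : ∑ i : Fin n, |x i - y i| = Real.sqrt ((∑ i : Fin n, |x i - y i|) ^ 2) := by
      rw [Real.sqrt_sq (Finset.sum_nonneg fun i _ => abs_nonneg _)]
    rw [h2]
    exact Real.sqrt_le_sqrt h1
  calc |F x - F y| = |∑ j ∈ Finset.range n, (F (z j) - F (z (j+1)))| := by rw [tele]
    _ ≤ ∑ j ∈ Finset.range n, |F (z j) - F (z (j+1))| := Finset.abs_sum_le_sum_abs _ _
    _ ≤ ∑ j ∈ Finset.range n,
        m * (if h : j < n then |x ⟨j, h⟩ - y ⟨j, h⟩| else 0) := Finset.sum_le_sum step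
    _ = ∑ i : Fin n, m * |x i - y i| := by
        rw [← Fin.sum_univ_eq_sum_range
          (fun j => m * (if h : j < n then |x ⟨j, h⟩ - y ⟨j, h⟩| else 0)) n]
        apply Finset.sum_congr rfl
        intro i _
        rw [dif_pos i.isLt]
    _ = m * ∑ i : Fin n, |x i - y i| := by rw [Finset.mul_sum]
    _ ≤ m * (Real.sqrt n * ‖x - y‖) := mul_le_mul_of_nonneg_left hCS hm
    _ = m * Real.sqrt n * ‖x - y‖ := by ring
end

section
/- Let F : [-1,1]^n → ℝ be a multilinear polynomial with |F(x)| ≤ m on [-1,1]^n. Then its gradient is (m·n)-Lipschitz on the cube: ‖∇F(x) − ∇F(y)‖₂ ≤ m·n·‖x − y‖₂ for all x, y ∈ [-1,1]^n. -/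
open Finset

/-- Evaluation of a multilinear polynomial given by coefficients `d`. -/
def Pev (n : ℕ) (d : Finset (Fin n) → ℝ) (x : Fin n → ℝ) : ℝ :=
  ∑ S : Finset (Fin n), d S * ∏ i ∈ S, x i

/-- Coefficients of the `j`-th partial derivative. -/
def dcoef (n : ℕ) (d : Finset (Fin n) → ℝ) (j : Fin n) : Finset (Fin n) → ℝ :=
  fun S => if j ∈ S then 0 else d (insert j S)

lemma pev_dcoef {n : ℕ} (d : Finset (Fin n) → ℝ) (j : Fin n) (x : Fin n → ℝ) :
    Pev n (dcoef n d j) x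
      = ∑ S : Finset (Fin n), (if j ∈ S then d S * ∏ i ∈ S.erase j, x i else 0) := by
  rw [Pev]
  refine Fintype.sum_bijective (fun S => symmDiff S {j}) ?_ _ _ ?_
  · exact Function.Involutive.bijective (fun S => by simp [symmDiff_symmDiff_cancel_right])
  · intro S
    beta_reduce
    by_cases h : j ∈ S
    · have hj : j ∉ symmDiff S {j} := by simp [Finset.mem_symmDiff, h]
      rw [if_neg hj]
      simp [dcoef, h]
    · have hj : symmDiff S {j} = insert j S := by
        ext a
        rcases eq_or_ne a j with rfl | ha
        · simp [Finset.mem_symmDiff, h]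
        · simp only [Finset.mem_symmDiff, Finset.mem_insert, Finset.mem_singleton, ha]
          tauto
      have hj2 : j ∈ symmDiff S {j} := by rw [hj]; exact Finset.mem_insert_self _ _
      rw [if_pos hj2, hj]
      simp [dcoef, h, Finset.erase_insert h]

lemma pev_update {n : ℕ} (d : Finset (Fin n) → ℝ) (j : Fin n) (x : Fin n → ℝ) (t : ℝ) :
    Pev n d (Function.update x j t)
      = (∑ S : Finset (Fin n), if j ∈ S then 0 else d S * ∏ i ∈ S, x i)
        + t * Pev n (dcoef n d j) x := by
  rw [pev_dcoef, Pev, Finset.mul_sum, ← Finset.sum_add_distrib]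
  refine Finset.sum_congr rfl fun S _ => ?_
  by_cases h : j ∈ S
  · simp only [if_pos h, zero_add]
    rw [← Finset.mul_prod_erase S _ h, Function.update_self]
    have : ∀ i ∈ S.erase j, Function.update x j t i = x i := by
      intro i hi
      exact Function.update_of_ne (Finset.ne_of_mem_erase hi) _ _
    rw [Finset.prod_congr rfl this]
    ring
  · simp only [if_neg h, add_zero, mul_zero, add_zero]
    congr 1
    refine Finset.prod_congr rfl fun i hi => ?_
    exact Function.update_of_ne (by rintro rfl; exact h hi) _ _

/-- points of the cube -/
def InCube {n : ℕ} (x : Fin n → ℝ) : Prop := ∀ i, x i ∈ Set.Icc (-1 : ℝ) 1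

lemma cube_update {n : ℕ} {x : Fin n → ℝ} (hx : InCube x) {j : Fin n} {t : ℝ}
    (ht : t ∈ Set.Icc (-1 : ℝ) 1) : InCube (Function.update x j t) := by
  intro i
  rcases eq_or_ne i j with rfl | h
  · simpa using ht
  · rw [Function.update_of_ne h]; exact hx i

lemma dcoef_bound {n : ℕ} {d : Finset (Fin n) → ℝ} {M : ℝ}
    (hM : ∀ z, InCube z → |Pev n d z| ≤ M) {x : Fin n → ℝ} (hx : InCube x) (j : Fin n) :
    |Pev n (dcoef n d j) x| ≤ M := by
  have h1 := pev_update d j x 1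
  have h2 := pev_update d j x (-1)
  have b1 := hM (Function.update x j 1)
    (cube_update hx (j := j) (by norm_num : (1:ℝ) ∈ Set.Icc (-1:ℝ) 1))
  have b2 := hM (Function.update x j (-1))
    (cube_update hx (j := j) (by norm_num : (-1:ℝ) ∈ Set.Icc (-1:ℝ) 1))
  rw [abs_le] at b1 b2 ⊢
  constructor <;> linarith [b1.1, b1.2, b2.1, b2.2]

lemma lip_coord {n : ℕ} {d : Finset (Fin n) → ℝ} {M : ℝ}
    (hM : ∀ z, InCube z → |Pev n d z| ≤ M) {x : Fin n → ℝ} (hx : InCube x)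
    (j : Fin n) (t : ℝ) :
    |Pev n d x - Pev n d (Function.update x j t)| ≤ M * |x j - t| := by
  have hx0 : Pev n d x = Pev n d (Function.update x j (x j)) := by
    rw [Function.update_eq_self]
  rw [hx0, pev_update, pev_update]
  have : ((∑ S : Finset (Fin n), if j ∈ S then 0 else d S * ∏ i ∈ S, x i)
        + x j * Pev n (dcoef n d j) x)
      - ((∑ S : Finset (Fin n), if j ∈ S then 0 else d S * ∏ i ∈ S, x i)
        + t * Pev n (dcoef n d j) x) = (x j - t) * Pev n (dcoef n d j) x := by ring
  rw [this, abs_mul, mul_comm]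
  exact mul_le_mul_of_nonneg_right (dcoef_bound hM hx j) (abs_nonneg _)

lemma lip_hybrid {n : ℕ} {d : Finset (Fin n) → ℝ} {M : ℝ}
    (hM : ∀ z, InCube z → |Pev n d z| ≤ M) {x y : Fin n → ℝ}
    (hx : InCube x) (hy : InCube y) (s : Finset (Fin n)) :
    |Pev n d x - Pev n d (fun i => if i ∈ s then y i else x i)|
      ≤ M * ∑ j ∈ s, |x j - y j| := by
  classical
  induction s using Finset.induction_on with
  | empty =>
    have : (fun i => if i ∈ (∅ : Finset (Fin n)) then y i else x i) = x := by
      funext i; simp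
    simp [this]
  | @insert a s ha ih =>
    have hyb_cube : InCube (fun i => if i ∈ s then y i else x i) := by
      intro i; by_cases h : i ∈ s <;> simp [h, hx i, hy i]
    have hstep : (fun i => if i ∈ insert a s then y i else x i)
        = Function.update (fun i => if i ∈ s then y i else x i) a (y a) := by
      funext i
      rcases eq_or_ne i a with rfl | h
      · simp
      · rw [Function.update_of_ne h]
        simp [Finset.mem_insert, h]
    rw [hstep, Finset.sum_insert ha]
    have tri := abs_sub_le (Pev n d x) (Pev n d (fun i => if i ∈ s then y i else x i))
      (Pev n d (Function.update (fun i => if i ∈ s then y i else x i) a (y a)))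
    have hc := lip_coord hM hyb_cube a (y a)
    rw [if_neg ha] at hc
    calc |Pev n d x - Pev n d (Function.update (fun i => if i ∈ s then y i else x i) a (y a))|
        ≤ |Pev n d x - Pev n d (fun i => if i ∈ s then y i else x i)|
          + |Pev n d (fun i => if i ∈ s then y i else x i)
            - Pev n d (Function.update (fun i => if i ∈ s then y i else x i) a (y a))| := tri
      _ ≤ M * ∑ j ∈ s, |x j - y j| + M * |x a - y a| := add_le_add ih hc
      _ = M * (|x a - y a| + ∑ j ∈ s, |x j - y j|) := by ring

lemma lip_all {n : ℕ} {d : Finset (Fin n) → ℝ} {M : ℝ}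
    (hM : ∀ z, InCube z → |Pev n d z| ≤ M) {x y : Fin n → ℝ}
    (hx : InCube x) (hy : InCube y) :
    |Pev n d x - Pev n d y| ≤ M * ∑ j, |x j - y j| := by
  have := lip_hybrid hM hx hy Finset.univ
  have hyy : (fun i => if i ∈ (Finset.univ : Finset (Fin n)) then y i else x i) = y := by
    funext i; simp
  rwa [hyy] at this

/-- A multilinear polynomial bounded by `m` on the cube `[-1,1]^n` has an
`(m·n)`-Lipschitz gradient on the cube. -/
theorem stmt_11 (n : ℕ) (m : ℝ) (F : EuclideanSpace ℝ (Fin n) → ℝ)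
    (c : Finset (Fin n) → ℝ)
    (hF : ∀ x, F x = ∑ S : Finset (Fin n), c S * ∏ i ∈ S, x i)
    (hbd : ∀ x : EuclideanSpace ℝ (Fin n), (∀ i, x i ∈ Set.Icc (-1 : ℝ) 1) → |F x| ≤ m) :
    ∀ x y : EuclideanSpace ℝ (Fin n),
      (∀ i, x i ∈ Set.Icc (-1 : ℝ) 1) → (∀ i, y i ∈ Set.Icc (-1 : ℝ) 1) →
      ‖gradient F x - gradient F y‖ ≤ m * n * ‖x - y‖ := by
  classical
  intro x y hx hy
  -- gradient formula
  set g : EuclideanSpace ℝ (Fin n) → EuclideanSpace ℝ (Fin n) :=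
    fun z => WithLp.toLp 2 (fun i => Pev n (dcoef n c i) z) with hg
  have hgrad : ∀ z : EuclideanSpace ℝ (Fin n), HasGradientAt F (g z) z := by
    intro z
    rw [hasGradientAt_iff_hasFDerivAt]
    have hterm : ∀ S ∈ (Finset.univ : Finset (Finset (Fin n))),
        HasFDerivAt (fun w : EuclideanSpace ℝ (Fin n) => c S * ∏ i ∈ S, w i)
          (c S • ∑ i ∈ S, (∏ j ∈ S.erase i, z j) • (EuclideanSpace.proj i : EuclideanSpace ℝ (Fin n) →L[ℝ] ℝ)) z := by
      intro S _
      have hp : HasFDerivAt (fun w : EuclideanSpace ℝ (Fin n) => ∏ i ∈ S, w i)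
          (∑ i ∈ S, (∏ j ∈ S.erase i, z j) • (EuclideanSpace.proj i : EuclideanSpace ℝ (Fin n) →L[ℝ] ℝ)) z := by
        refine HasFDerivAt.finset_prod (fun i _ => ?_)
        have h0 := (EuclideanSpace.proj i : EuclideanSpace ℝ (Fin n) →L[ℝ] ℝ).hasFDerivAt (x := z)
        exact h0.congr_of_eventuallyEq (Filter.Eventually.of_forall fun w => rfl)
      exact hp.const_mul (c S)
    have hsum := HasFDerivAt.fun_sum hterm
    have heq : (fun w : EuclideanSpace ℝ (Fin n) => ∑ S : Finset (Fin n), c S * ∏ i ∈ S, w i) = F := by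
      funext w; exact (hF w).symm
    rw [heq] at hsum
    refine hsum.congr_fderiv ?_
    ext v
    simp only [ContinuousLinearMap.sum_apply, ContinuousLinearMap.smul_apply,
      PiLp.proj_apply, smul_eq_mul, InnerProductSpace.toDual_apply_apply]
    rw [PiLp.inner_apply]
    simp only [RCLike.inner_apply, conj_trivial]
    have hswap : ∑ S : Finset (Fin n), c S * ∑ i ∈ S, (∏ j ∈ S.erase i, z j) * v i
        = ∑ i, (Pev n (dcoef n c i) z) * v i := by
      have h1 : ∀ S : Finset (Fin n), c S * ∑ i ∈ S, (∏ j ∈ S.erase i, z j) * v i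
          = ∑ i, (if i ∈ S then c S * ∏ j ∈ S.erase i, z j else 0) * v i := by
        intro S
        rw [Finset.mul_sum]
        rw [← Finset.sum_filter_of_ne (f := fun i => (if i ∈ S then c S * ∏ j ∈ S.erase i, z j else 0) * v i)
          (p := fun i => i ∈ S) ?_]
        · rw [Finset.filter_mem_eq_inter, Finset.univ_inter]
          refine Finset.sum_congr rfl fun i hi => ?_
          rw [if_pos hi]; ring
        · intro i _ hne
          by_contra h
          exact hne (by simp [h] at *)
      simp only [h1]
      rw [Finset.sum_comm]
      refine Finset.sum_congr rfl fun i _ => ?_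
      rw [pev_dcoef, ← Finset.sum_mul]
    simpa [hg, mul_comm] using hswap
  have hgx : gradient F x = g x := (hgrad x).gradient
  have hgy : gradient F y = g y := (hgrad y).gradient
  -- bounds
  have hm0 : (0:ℝ) ≤ m := le_trans (abs_nonneg _) (hbd x hx)
  have hMc : ∀ z, InCube z → |Pev n c z| ≤ m := by
    intro z hz
    have := hbd (WithLp.toLp 2 z) hz
    rwa [hF (WithLp.toLp 2 z)] at this
  have hMi : ∀ i : Fin n, ∀ z, InCube z → |Pev n (dcoef n c i) z| ≤ m := by
    intro i z hz
    exact dcoef_bound hMc hz i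
  set D : ℝ := ∑ j, |x j - y j| with hD
  have hD0 : 0 ≤ D := Finset.sum_nonneg fun j _ => abs_nonneg _
  have hcomp : ∀ i : Fin n, |Pev n (dcoef n c i) x - Pev n (dcoef n c i) y| ≤ m * D :=
    fun i => lip_all (hMi i) hx hy
  -- Cauchy–Schwarz: D ≤ √n ‖x - y‖
  have hnormxy : ‖x - y‖ = Real.sqrt (∑ j, (x j - y j)^2) := by
    rw [EuclideanSpace.norm_eq]
    congr 1
    refine Finset.sum_congr rfl fun j _ => ?_
    simp [Real.norm_eq_abs, sq_abs]
  have hDle : D ≤ Real.sqrt n * ‖x - y‖ := by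
    have hsq : D^2 ≤ (n : ℝ) * ∑ j, (x j - y j)^2 := by
      have := sq_sum_le_card_mul_sum_sq (s := Finset.univ) (f := fun j => |x j - y j|)
      simpa [sq_abs] using this
    have := Real.sqrt_le_sqrt hsq
    rw [Real.sqrt_sq hD0] at this
    rwa [Real.sqrt_mul (by positivity) _, ← hnormxy] at this
  -- final computation
  rw [hgx, hgy]
  have hnorm : ‖g x - g y‖ = Real.sqrt (∑ i, (Pev n (dcoef n c i) x - Pev n (dcoef n c i) y)^2) := by
    rw [EuclideanSpace.norm_eq]
    congr 1
    refine Finset.sum_congr rfl fun i _ => ?_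
    simp [Real.norm_eq_abs, sq_abs, hg]
  rw [hnorm]
  have hle1 : (∑ i, (Pev n (dcoef n c i) x - Pev n (dcoef n c i) y)^2) ≤ (n : ℝ) * (m * D)^2 := by
    calc (∑ i, (Pev n (dcoef n c i) x - Pev n (dcoef n c i) y)^2)
        ≤ ∑ _i : Fin n, (m * D)^2 := by
          refine Finset.sum_le_sum fun i _ => ?_
          have := hcomp i
          nlinarith [abs_nonneg (Pev n (dcoef n c i) x - Pev n (dcoef n c i) y),
            abs_sub_abs_le_abs_sub (Pev n (dcoef n c i) x) (Pev n (dcoef n c i) y),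
            sq_abs (Pev n (dcoef n c i) x - Pev n (dcoef n c i) y)]
      _ = (n : ℝ) * (m * D)^2 := by simp [Finset.sum_const, nsmul_eq_mul]
  calc Real.sqrt (∑ i, (Pev n (dcoef n c i) x - Pev n (dcoef n c i) y)^2)
      ≤ Real.sqrt ((n : ℝ) * (m * D)^2) := Real.sqrt_le_sqrt hle1
    _ = Real.sqrt n * (m * D) := by
        rw [Real.sqrt_mul (by positivity), Real.sqrt_sq (by positivity)]
    _ ≤ Real.sqrt n * (m * (Real.sqrt n * ‖x - y‖)) := by
        have : m * D ≤ m * (Real.sqrt n * ‖x - y‖) := mul_le_mul_of_nonneg_left hDle hm0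
        exact mul_le_mul_of_nonneg_left this (Real.sqrt_nonneg _)
    _ = m * (Real.sqrt n * Real.sqrt n) * ‖x - y‖ := by ring
    _ = m * n * ‖x - y‖ := by
        rw [Real.mul_self_sqrt (by positivity)]
end
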